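/- The Jaccard distance d(A,B) = 1 − |A ∩ B| / |A ∪ B| (with d(∅,∅) = 0) satisfies the triangle inequality on finite sets, and hence defines a metric on the collection of finite subsets of a given type. -/

import Mathlib

/-- The Jaccard distance on finite sets: `1 − |A ∩ B| / |A ∪ B|`, with the convention
`d(∅, ∅) = 0`. -/
noncomputable def jaccardDist {α : Type*} [DecidableEq α] (A B : Finset α) : ℝ :=
  if A ∪ B = ∅ then 0 else 1 - ((A ∩ B).card : ℝ) / ((A ∪ B).card : ℝ)

namespace JaccardAux

variable {α : Type*} [DecidableEq α]

lemma sd_card (A B : Finset α) :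
    ((A \ B ∪ B \ A)).card + (A ∩ B).card = (A ∪ B).card := by
  rw [← Finset.card_union_of_disjoint, Finset.union_assoc]
  · congr 1
    ext x; simp only [Finset.mem_union, Finset.mem_sdiff, Finset.mem_inter]; tauto
  · rw [Finset.disjoint_left]
    intro x hx hx2
    simp only [Finset.mem_union, Finset.mem_sdiff, Finset.mem_inter] at hx hx2; tauto

lemma jd_eq (A B : Finset α) :
    jaccardDist A B = ((A \ B ∪ B \ A).card : ℝ) / ((A ∪ B).card : ℝ) := by
  unfold jaccardDist
  by_cases h : A ∪ B = ∅
  · obtain ⟨hA, hB⟩ := Finset.union_eq_empty.mp h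
    simp [h, hA, hB]
  · rw [if_neg h]
    have hu : (0:ℝ) < ((A ∪ B).card : ℝ) := by
      have := Finset.card_pos.mpr (Finset.nonempty_iff_ne_empty.mpr h)
      exact_mod_cast this
    have hc := sd_card A B
    field_simp
    push_cast [← hc]
    ring

lemma jd_nonneg (A B : Finset α) : 0 ≤ jaccardDist A B := by
  rw [jd_eq]; positivity

lemma jd_symm (A B : Finset α) : jaccardDist A B = jaccardDist B A := by
  unfold jaccardDist
  rw [Finset.union_comm, Finset.inter_comm]

lemma jd_eq_zero_iff (A B : Finset α) : jaccardDist A B = 0 ↔ A = B := by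
  unfold jaccardDist
  by_cases h : A ∪ B = ∅
  · obtain ⟨hA, hB⟩ := Finset.union_eq_empty.mp h
    simp [h, hA, hB]
  · rw [if_neg h]
    have hu : (0:ℝ) < ((A ∪ B).card : ℝ) := by
      have := Finset.card_pos.mpr (Finset.nonempty_iff_ne_empty.mpr h)
      exact_mod_cast this
    constructor
    · intro he
      have : ((A ∩ B).card : ℝ) = ((A ∪ B).card : ℝ) := by
        field_simp at he
        linarith
      have hcard : (A ∪ B).card ≤ (A ∩ B).card := by exact_mod_cast this.ge
      have heq : A ∩ B = A ∪ B :=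
        Finset.eq_of_subset_of_card_le (Finset.inter_subset_union) hcard
      apply Finset.Subset.antisymm
      · intro x hx
        have : x ∈ A ∩ B := heq ▸ (Finset.mem_union_left B hx)
        exact (Finset.mem_inter.mp this).2
      · intro x hx
        have : x ∈ A ∩ B := heq ▸ (Finset.mem_union_right A hx)
        exact (Finset.mem_inter.mp this).1
    · intro he
      subst he
      simp [Finset.inter_self, Finset.union_self] at *
      field_simp
      norm_num

lemma jd_triangle (A B C : Finset α) :
    jaccardDist A C ≤ jaccardDist A B + jaccardDist B C := by
  by_cases hAC : A ∪ C = ∅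
  · have h0 : jaccardDist A C = 0 := by unfold jaccardDist; rw [if_pos hAC]
    rw [h0]
    have := jd_nonneg A B
    have := jd_nonneg B C
    linarith
  rw [jd_eq, jd_eq, jd_eq]
  set sAC := ((A \ C ∪ C \ A).card : ℝ) with hsAC
  set sAB := ((A \ B ∪ B \ A).card : ℝ) with hsAB
  set sBC := ((B \ C ∪ C \ B).card : ℝ) with hsBC
  set uAC := (((A ∪ C)).card : ℝ) with huAC
  set uAB := (((A ∪ B)).card : ℝ) with huAB
  set uBC := (((B ∪ C)).card : ℝ) with huBC
  set tB := ((B \ (A ∪ C)).card : ℝ) with htB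
  set m := (((A ∪ B ∪ C)).card : ℝ) with hm
  -- basic positivity
  have huACpos : (0:ℝ) < uAC := by
    rw [huAC]
    exact_mod_cast Finset.card_pos.mpr (Finset.nonempty_iff_ne_empty.mpr hAC)
  have htBnn : (0:ℝ) ≤ tB := by positivity
  have hsACnn : (0:ℝ) ≤ sAC := by positivity
  have hsABnn : (0:ℝ) ≤ sAB := by positivity
  have hsBCnn : (0:ℝ) ≤ sBC := by positivity
  -- m = uAC + tB
  have hmsplit : m = uAC + tB := by
    rw [hm, huAC, htB]
    have : A ∪ B ∪ C = (A ∪ C) ∪ (B \ (A ∪ C)) := by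
      ext x; simp only [Finset.mem_union, Finset.mem_sdiff]; tauto
    rw [this, Finset.card_union_of_disjoint (Finset.disjoint_sdiff)]
    push_cast; ring
  have hmpos : (0:ℝ) < m := by linarith
  -- sAC ≤ uAC
  have hsACle : sAC ≤ uAC := by
    have := sd_card A C
    have h' : (A \ C ∪ C \ A).card ≤ (A ∪ C).card := by omega
    rw [hsAC, huAC]; exact_mod_cast h'
  -- uAB ≤ m, uBC ≤ m
  have huABle : uAB ≤ m := by
    have : (A ∪ B).card ≤ (A ∪ B ∪ C).card :=
      Finset.card_le_card (Finset.subset_union_left)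
    rw [huAB, hm]; exact_mod_cast this
  have huBCle : uBC ≤ m := by
    have : (B ∪ C).card ≤ (A ∪ B ∪ C).card := by
      apply Finset.card_le_card
      intro x hx
      simp only [Finset.mem_union] at *; tauto
    rw [huBC, hm]; exact_mod_cast this
  -- sAB ≤ uAB, sBC ≤ uBC
  have hsABle : sAB ≤ uAB := by
    have := sd_card A B
    have h' : (A \ B ∪ B \ A).card ≤ (A ∪ B).card := by omega
    rw [hsAB, huAB]; exact_mod_cast h'
  have hsBCle : sBC ≤ uBC := by
    have := sd_card B C
    have h' : (B \ C ∪ C \ B).card ≤ (B ∪ C).card := by omega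
    rw [hsBC, huBC]; exact_mod_cast h'
  -- key combinatorial inequality: sAC + tB ≤ sAB + sBC
  have hkey : sAC + tB ≤ sAB + sBC := by
    have hdisj : Disjoint (A \ C ∪ C \ A) (B \ (A ∪ C)) := by
      rw [Finset.disjoint_left]
      intro x hx hx2
      simp only [Finset.mem_union, Finset.mem_sdiff] at hx hx2; tauto
    have hsub : (A \ C ∪ C \ A) ∪ (B \ (A ∪ C)) ⊆ (A \ B ∪ B \ A) ∪ (B \ C ∪ C \ B) := by
      intro x hx
      simp only [Finset.mem_union, Finset.mem_sdiff] at *; tauto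
    have h1 : ((A \ C ∪ C \ A) ∪ (B \ (A ∪ C))).card ≤
        ((A \ B ∪ B \ A) ∪ (B \ C ∪ C \ B)).card := Finset.card_le_card hsub
    have h2 : ((A \ B ∪ B \ A) ∪ (B \ C ∪ C \ B)).card ≤
        (A \ B ∪ B \ A).card + (B \ C ∪ C \ B).card := Finset.card_union_le _ _
    have h3 := Finset.card_union_of_disjoint hdisj
    have : (A \ C ∪ C \ A).card + (B \ (A ∪ C)).card ≤
        (A \ B ∪ B \ A).card + (B \ C ∪ C \ B).card := by omega
    rw [hsAC, htB, hsAB, hsBC]; exact_mod_cast this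
  -- chain of real inequalities
  have step1 : sAC / uAC ≤ (sAC + tB) / m := by
    rw [div_le_div_iff₀ huACpos hmpos, hmsplit]
    nlinarith
  have step2 : (sAC + tB) / m ≤ (sAB + sBC) / m := by
    gcongr
  have step3 : sAB / m ≤ sAB / uAB := by
    by_cases hAB : A ∪ B = ∅
    · obtain ⟨hA, hB⟩ := Finset.union_eq_empty.mp hAB
      simp [hsAB, hA, hB]
    · have huABpos : (0:ℝ) < uAB := by
        rw [huAB]
        exact_mod_cast Finset.card_pos.mpr (Finset.nonempty_iff_ne_empty.mpr hAB)
      exact div_le_div_of_nonneg_left hsABnn huABpos huABle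
  have step4 : sBC / m ≤ sBC / uBC := by
    by_cases hBC : B ∪ C = ∅
    · obtain ⟨hB, hC⟩ := Finset.union_eq_empty.mp hBC
      simp [hsBC, hB, hC]
    · have huBCpos : (0:ℝ) < uBC := by
        rw [huBC]
        exact_mod_cast Finset.card_pos.mpr (Finset.nonempty_iff_ne_empty.mpr hBC)
      exact div_le_div_of_nonneg_left hsBCnn huBCpos huBCle
  have : (sAB + sBC) / m = sAB / m + sBC / m := add_div _ _ _
  linarith [step1, step2, step3, step4, this.le]

end JaccardAux

/-- The Jaccard distance satisfies the triangle inequality on finite sets, and (being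
also symmetric, nonnegative, and zero exactly on equal pairs) defines a metric on the
collection of finite subsets of a given type. -/
theorem jaccardDist_is_metric {α : Type*} [DecidableEq α] :
    (∀ A B C : Finset α, jaccardDist A C ≤ jaccardDist A B + jaccardDist B C) ∧
    (∀ A B : Finset α, jaccardDist A B = jaccardDist B A) ∧
    (∀ A B : Finset α, 0 ≤ jaccardDist A B) ∧
    (∀ A B : Finset α, jaccardDist A B = 0 ↔ A = B) := by
  exact ⟨JaccardAux.jd_triangle, JaccardAux.jd_symm, JaccardAux.jd_nonneg,
    JaccardAux.jd_eq_zero_iff⟩
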